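/- Radial derivative identity: for every α > 0, the function r ↦ 1 − ∫₀^∞ exp(−s − αr²/(4s)) ds is differentiable on (0,∞) with derivative at each r > 0 equal to (α/2) r ∫₀^∞ s^{-1} exp(−s − αr²/(4s)) ds = 2πα r B₁(√α · r). -/

import Mathlib

open MeasureTheory Real

/-- The radial Bessel kernel with parameter `1`:
`B₁(ρ) = (1/(4π)) ∫₀^∞ t⁻¹ exp(−ρ²/(4t) − t) dt`. -/
noncomputable def besselRadialOne (ρ : ℝ) : ℝ :=
  (1 / (4 * π)) * ∫ t in Set.Ioi (0 : ℝ), t⁻¹ * Real.exp (-ρ ^ 2 / (4 * t) - t)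

lemma exp_neg_div_le (c s : ℝ) (hc : 0 < c) (hs : 0 < s) :
    Real.exp (-(c / s)) ≤ s / c := by
  have h1 : c / s ≤ Real.exp (c / s) := (Real.add_one_le_exp _).trans' (by linarith)
  rw [Real.exp_neg]
  have hcs : 0 < c / s := div_pos hc hs
  calc (Real.exp (c/s))⁻¹ ≤ (c/s)⁻¹ := by
        apply inv_anti₀ hcs h1
    _ = s / c := by rw [inv_div]
  
lemma exp_int : IntegrableOn (fun s : ℝ => Real.exp (-s)) (Set.Ioi 0) := by
  simpa using exp_neg_integrableOn_Ioi 0 (one_pos)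

/-- Radial derivative identity for `r ↦ 1 − g_α(r)`. -/
theorem radial_derivative_identity (α : ℝ) (hα : 0 < α) (r : ℝ) (hr : 0 < r) :
    HasDerivAt (fun ρ : ℝ => 1 - ∫ s in Set.Ioi (0 : ℝ), Real.exp (-s - α * ρ ^ 2 / (4 * s)))
      ((α / 2) * r *
        ∫ s in Set.Ioi (0 : ℝ), s⁻¹ * Real.exp (-s - α * r ^ 2 / (4 * s))) r ∧
    (α / 2) * r * (∫ s in Set.Ioi (0 : ℝ), s⁻¹ * Real.exp (-s - α * r ^ 2 / (4 * s))) =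
      2 * π * α * r * besselRadialOne (Real.sqrt α * r) := by
  constructor
  · -- derivative part
    set μ := volume.restrict (Set.Ioi (0:ℝ))
    set F : ℝ → ℝ → ℝ := fun ρ s => Real.exp (-s - α * ρ ^ 2 / (4 * s)) with hF
    set F' : ℝ → ℝ → ℝ := fun ρ s => (-(α * ρ / 2)) * (s⁻¹ * Real.exp (-s - α * ρ ^ 2 / (4 * s)))
      with hF'
    have hmeas : ∀ ρ : ℝ, AEStronglyMeasurable (F ρ) μ := by
      intro ρ
      apply Measurable.aestronglyMeasurable
      fun_prop
    have hmeas' : AEStronglyMeasurable (F' r) μ := by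
      apply Measurable.aestronglyMeasurable
      fun_prop
    have hFint : Integrable (F r) μ := by
      apply Integrable.mono exp_int (hmeas r)
      filter_upwards [ae_restrict_mem measurableSet_Ioi] with s hs
      have hs' : (0:ℝ) < s := hs
      rw [Real.norm_eq_abs, abs_of_pos (Real.exp_pos _), Real.norm_eq_abs,
        abs_of_pos (Real.exp_pos _)]
      apply Real.exp_le_exp.2
      have : 0 ≤ α * r ^ 2 / (4 * s) := by positivity
      linarith
    have hbound : ∀ᵐ s ∂μ, ∀ ρ ∈ Metric.ball r (r/2), ‖F' ρ s‖ ≤ (12 / r) * Real.exp (-s) := by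
      filter_upwards [ae_restrict_mem measurableSet_Ioi] with s hs ρ hρ
      have hs : (0:ℝ) < s := hs
      rw [Metric.mem_ball, Real.dist_eq, abs_sub_lt_iff] at hρ
      have hρ1 : r / 2 < ρ := by linarith
      have hρ2 : ρ < 3 * r / 2 := by linarith
      have hρ0 : 0 < ρ := by linarith
      have key : α * ρ ^ 2 / (4 * s) ≥ α * r ^ 2 / (16 * s) := by
        have : r ^ 2 / 4 ≤ ρ ^ 2 := by nlinarith
        rw [ge_iff_le, div_le_div_iff₀ (by positivity) (by positivity)]
        nlinarith [mul_le_mul_of_nonneg_left this (by positivity : (0:ℝ) ≤ 16 * s * α)]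
      have hsplit : Real.exp (-s - α * ρ ^ 2 / (4 * s))
          ≤ Real.exp (-s) * Real.exp (-(α * r ^ 2 / (16 * s))) := by
        rw [← Real.exp_add]
        apply Real.exp_le_exp.2
        linarith
      have hinv : s⁻¹ * Real.exp (-(α * r ^ 2 / 16 / s)) ≤ 16 / (α * r ^ 2) := by
        have := exp_neg_div_le (α * r ^ 2 / 16) s (by positivity) hs
        calc s⁻¹ * Real.exp (-(α * r ^ 2 / 16 / s)) ≤ s⁻¹ * (s / (α * r ^ 2 / 16)) := by
              apply mul_le_mul_of_nonneg_left this (by positivity)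
          _ = 16 / (α * r ^ 2) := by field_simp
      have heq : α * r ^ 2 / (16 * s) = α * r ^ 2 / 16 / s := by ring
      rw [hF']
      rw [Real.norm_eq_abs, abs_mul, abs_mul, abs_neg, abs_of_pos (by positivity : (0:ℝ) < α * ρ / 2),
        abs_of_pos (by positivity : (0:ℝ) < s⁻¹), abs_of_pos (Real.exp_pos _)]
      calc α * ρ / 2 * (s⁻¹ * Real.exp (-s - α * ρ ^ 2 / (4 * s)))
          ≤ α * (3 * r / 2) / 2 * (s⁻¹ * (Real.exp (-s) * Real.exp (-(α * r ^ 2 / (16 * s))))) := by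
            apply mul_le_mul (by nlinarith) (mul_le_mul_of_nonneg_left hsplit (by positivity))
              (by positivity) (by positivity)
        _ = (3 * α * r / 4) * (s⁻¹ * Real.exp (-(α * r ^ 2 / 16 / s))) * Real.exp (-s) := by
            rw [heq]; ring
        _ ≤ (3 * α * r / 4) * (16 / (α * r ^ 2)) * Real.exp (-s) := by
            apply mul_le_mul_of_nonneg_right (mul_le_mul_of_nonneg_left hinv (by positivity))
              (Real.exp_pos _).le
        _ = (12 / r) * Real.exp (-s) := by field_simp; ring
    have hbound_int : Integrable (fun s => (12 / r) * Real.exp (-s)) μ :=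
      (exp_int.const_mul _)
    have hdiff : ∀ᵐ s ∂μ, ∀ ρ ∈ Metric.ball r (r/2), HasDerivAt (F · s) (F' ρ s) ρ := by
      filter_upwards [ae_restrict_mem measurableSet_Ioi] with s hs ρ _
      have hs : (0:ℝ) < s := hs
      have h1 : HasDerivAt (fun ρ : ℝ => -s - α * ρ ^ 2 / (4 * s))
          (-(α * (2 * ρ) / (4 * s))) ρ := by
        have h2 : HasDerivAt (fun ρ : ℝ => α * ρ ^ 2 / (4 * s))
            (α * (2 * ρ) / (4 * s)) ρ := by
          have := (hasDerivAt_pow 2 ρ).const_mul α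
          simpa [mul_comm, mul_assoc, pow_one] using this.div_const (4 * s)
        simpa using h2.const_sub (-s)
      have := h1.exp
      convert this using 1
      rw [hF']
      field_simp
      ring
    have key := hasDerivAt_integral_of_dominated_loc_of_deriv_le (μ := μ)
      (F := F) (F' := F') (bound := fun s => (12 / r) * Real.exp (-s))
      (Metric.ball_mem_nhds r (half_pos hr)) (Filter.Eventually.of_forall hmeas) hFint hmeas' hbound hbound_int hdiff
    have hD := key.2
    have hint_eq : (∫ s, F' r s ∂μ)
        = (-(α * r / 2)) * ∫ s in Set.Ioi (0:ℝ), s⁻¹ * Real.exp (-s - α * r ^ 2 / (4 * s)) := by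
      rw [hF']
      exact integral_const_mul _ _
    have := (hasDerivAt_const r (1:ℝ)).sub hD
    rw [hint_eq] at this
    exact this.congr_deriv (by ring)
  · -- algebraic identity
    have h1 : (Real.sqrt α * r) ^ 2 = α * r ^ 2 := by
      rw [mul_pow, Real.sq_sqrt hα.le]
    rw [besselRadialOne, h1]
    have h2 : ∀ t : ℝ, -(α * r ^ 2) / (4 * t) - t = -t - α * r ^ 2 / (4 * t) := by
      intro t; ring
    simp_rw [h2]
    have hπ : π ≠ 0 := Real.pi_ne_zero
    field_simp
    congr 1
    · norm_num
    · congr 1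
      funext s
      ring_nf
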